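/- Let P be a probability distribution on ℝ with cdf F_P, let a ≤ b be real, and define the truncated CRPS S(P, z) = ∫_a^b (F_P(u) − 1_{z ≤ u})² du and R_q(a,b) = ∫_a^b F_P(u)^q du. Then for all z ∈ ℝ: S(P, z) = (b − max(a,z))₊ + R_2(a, b) − 2 R_1(max(a,z), b), where R_1(c,b) is interpreted as 0 when c > b. -/

import Mathlib

open MeasureTheory Set

/-- decomposition of the truncated CRPS with finite endpoints `a ≤ b`:
`S(P,z) = (b − a∨z)₊ + R₂(a,b) − 2 R₁(a∨z, b)`, where `S(P,z) = ∫_a^b (F_P(u) − 1_{z≤u})² du`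
and `R_q(c,b) = ∫_{[c,b]} F_P(u)^q du` (which is `0` when `c > b`). -/
theorem stmt6 (P : Measure ℝ) [IsProbabilityMeasure P] (a b : ℝ) (hab : a ≤ b) (z : ℝ) :
    (∫ u in Set.Icc a b,
        ((P (Set.Iic u)).toReal - (if z ≤ u then (1 : ℝ) else 0)) ^ 2) =
      max (b - max a z) 0
      + (∫ u in Set.Icc a b, ((P (Set.Iic u)).toReal) ^ 2)
      - 2 * (∫ u in Set.Icc (max a z) b, (P (Set.Iic u)).toReal) := by
  set F : ℝ → ℝ := fun u => (P (Set.Iic u)).toReal with hF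
  have hFmono : Monotone F := fun u v h =>
    ENNReal.toReal_mono (measure_ne_top P _) (measure_mono (Iic_subset_Iic.mpr h))
  have hFmeas : Measurable F := hFmono.measurable
  have hF01 : ∀ u, 0 ≤ F u ∧ F u ≤ 1 := by
    intro u
    refine ⟨ENNReal.toReal_nonneg, ?_⟩
    calc F u ≤ (1 : ENNReal).toReal := ENNReal.toReal_mono ENNReal.one_ne_top prob_le_one
    _ = 1 := ENNReal.toReal_one
  have hint : ∀ (f : ℝ → ℝ) (C c d : ℝ), Measurable f → (∀ u, ‖f u‖ ≤ C) →
      IntegrableOn f (Set.Icc c d) := fun f C c d hm hb =>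
    (integrableOn_const measure_Icc_lt_top.ne).mono' hm.aestronglyMeasurable
      (Filter.Eventually.of_forall hb)
  have hF2 : IntegrableOn (fun u => F u ^ 2) (Set.Icc a b) := by
    refine hint _ 1 a b (hFmeas.pow_const 2) (fun u => ?_)
    have := hF01 u
    rw [Real.norm_eq_abs, abs_pow, abs_of_nonneg this.1]
    nlinarith [this.1, this.2]
  have hg : IntegrableOn (fun u => if z ≤ u then 1 - 2 * F u else 0) (Set.Icc a b) := by
    refine hint _ 3 a b (Measurable.ite measurableSet_Ici
      ((measurable_const.sub (hFmeas.const_mul 2))) measurable_const) (fun u => ?_)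
    have := hF01 u
    rw [Real.norm_eq_abs]
    split <;> [skip; simp] <;> rw [abs_le] <;> constructor <;> nlinarith [this.1, this.2]
  have hFint : ∀ c : ℝ, IntegrableOn F (Set.Icc c b) := fun c =>
    hint _ 1 c b hFmeas (fun u => by
      rw [Real.norm_eq_abs, abs_of_nonneg (hF01 u).1]; exact (hF01 u).2)
  have hptw : ∀ u, (F u - (if z ≤ u then (1:ℝ) else 0)) ^ 2
      = F u ^ 2 + (if z ≤ u then 1 - 2 * F u else 0) := by
    intro u; split <;> ring
  simp only [show ∀ u, ((P (Set.Iic u)).toReal - (if z ≤ u then (1:ℝ) else 0)) ^ 2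
      = F u ^ 2 + (if z ≤ u then 1 - 2 * F u else 0) from hptw]
  rw [integral_add hF2 hg]
  have hind : (fun u => if z ≤ u then 1 - 2 * F u else 0)
      = fun u => (Set.Ici z).indicator (fun u => 1 - 2 * F u) u := by
    funext u; simp [Set.indicator_apply, Set.mem_Ici]
  have hicc : Set.Icc a b ∩ Set.Ici z = Set.Icc (max a z) b := by
    ext u; simp only [Set.mem_inter_iff, Set.mem_Icc, Set.mem_Ici, max_le_iff]
    constructor
    · rintro ⟨⟨h1, h2⟩, h3⟩; exact ⟨⟨h1, h3⟩, h2⟩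
    · rintro ⟨⟨h1, h3⟩, h2⟩; exact ⟨⟨h1, h2⟩, h3⟩
  rw [hind, setIntegral_indicator measurableSet_Ici, hicc]
  have hsub : IntegrableOn (fun u => (2:ℝ) * F u) (Set.Icc (max a z) b) :=
    (hFint (max a z)).const_mul 2
  have hone : IntegrableOn (fun _ : ℝ => (1:ℝ)) (Set.Icc (max a z) b) :=
    integrableOn_const measure_Icc_lt_top.ne
  have : (∫ u in Set.Icc (max a z) b, (1 - 2 * F u))
      = (∫ _ in Set.Icc (max a z) b, (1:ℝ)) - ∫ u in Set.Icc (max a z) b, 2 * F u := by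
    exact integral_sub hone hsub
  rw [this, integral_const_mul, setIntegral_const, smul_eq_mul, mul_one]
  have hvol : (volume (Set.Icc (max a z) b)).toReal = max (b - max a z) 0 := by
    rw [Real.volume_Icc]
    rcases le_total (max a z) b with h | h
    · rw [ENNReal.toReal_ofReal (sub_nonneg.mpr h)]
      exact (max_eq_left (sub_nonneg.mpr h)).symm
    · rw [ENNReal.ofReal_eq_zero.mpr (sub_nonpos.mpr h), ENNReal.toReal_zero]
      exact (max_eq_right (sub_nonpos.mpr h)).symm
  rw [measureReal_def, hvol]
  ring
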